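/- In the BP encoding of a binary tree, given two nodes u ≤ v (identified with the indices of their closing parentheses), the position of the leftmost minimum of the excess function on the interval [u, v] is the closing parenthesis of the lowest common ancestor of u and v. -/

import Mathlib

/-- A binary tree: `leaf` is the empty tree; each internal node has an
optional left and an optional right subtree (possibly `leaf`). -/
inductive BinTree : Type where
  | leaf : BinTree
  | node : BinTree → BinTree → BinTree
deriving DecidableEq

namespace BinTree

/-- Number of nodes of a binary tree. -/
def size : BinTree → ℕ
  | leaf => 0
  | node l r => l.size + r.size + 1

/-- BalancedBP-parenthesis encoding of binary trees:
`BP(empty) = ε`, `BP(t) = '(' ++ BP(t_l) ++ ')' ++ BP(t_r)`.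
`true` is an opening parenthesis, `false` a closing one. -/
def bp : BinTree → List Bool
  | leaf => []
  | node l r => true :: (l.bp ++ false :: r.bp)

/-- The subtree reached by following a path (`false` = left, `true` = right). -/
def subtreeAt : BinTree → List Bool → Option BinTree
  | t, [] => some t
  | leaf, _ :: _ => none
  | node l _, false :: p => subtreeAt l p
  | node _ r, true :: p => subtreeAt r p

/-- A path identifies an actual node of the tree (not an empty slot). -/
def ValidPath (t : BinTree) (p : List Bool) : Prop :=
  ∃ l r, subtreeAt t p = some (node l r)

/-- Index (0-based) of the opening parenthesis of the node at a path. -/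
def openIdx : BinTree → List Bool → Option ℕ
  | leaf, _ => none
  | node _ _, [] => some 0
  | node l _, false :: p => (openIdx l p).map (· + 1)
  | node l r, true :: p => (openIdx r p).map (· + (l.bp.length + 2))

/-- Index (0-based) of the closing parenthesis of the node at a path. -/
def closeIdx : BinTree → List Bool → Option ℕ
  | leaf, _ => none
  | node l _, [] => some (l.bp.length + 1)
  | node l _, false :: p => (closeIdx l p).map (· + 1)
  | node l r, true :: p => (closeIdx r p).map (· + (l.bp.length + 2))

/-- Inorder rank (0-based) of the node at a path. -/
def inorderIdx : BinTree → List Bool → Option ℕ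
  | leaf, _ => none
  | node l _, [] => some l.size
  | node l _, false :: p => inorderIdx l p
  | node l r, true :: p => (inorderIdx r p).map (· + (l.size + 1))

end BinTree

/-- A sequence of parentheses (`true` = '(') is balanced: equally many opening
and closing parentheses, and every prefix has at least as many opening ones. -/
def BalancedBP (s : List Bool) : Prop :=
  s.count true = s.count false ∧
  ∀ k, (s.take k).count false ≤ (s.take k).count true

/-- `excess s k`: number of opening minus closing parentheses among the first `k` symbols. -/
def excess (s : List Bool) (k : ℕ) : ℤ :=
  ((s.take k).count true : ℤ) - ((s.take k).count false : ℤ)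

/-- `IsMatch s i j`: positions `i < j` form a matching pair of parentheses
(the standard stack-based matching). -/
def IsMatch (s : List Bool) (i j : ℕ) : Prop :=
  i < j ∧ j < s.length ∧ s[i]? = some true ∧ s[j]? = some false ∧
  excess s (j + 1) = excess s i ∧
  ∀ k, i < k → k ≤ j → excess s i < excess s k

/-- `EnclosePair s i v j`: `j` is the closing parenthesis whose matching pair
tightly encloses the matching pair `(i, v)`. -/
def EnclosePair (s : List Bool) (i v j : ℕ) : Prop :=
  (∃ i', IsMatch s i' j ∧ i' < i ∧ v < j) ∧
  ∀ i'' j'', IsMatch s i'' j'' → i'' < i → v < j'' → j ≤ j''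

/-- Longest common prefix of two paths. -/
def lcp : List Bool → List Bool → List Bool
  | a :: as, b :: bs => if a = b then a :: lcp as bs else []
  | _, _ => []


open BinTree in
lemma count_bp (t : BinTree) : t.bp.count true = t.size ∧ t.bp.count false = t.size := by
  induction t with
  | leaf => simp [BinTree.bp, BinTree.size]
  | node l r ihl ihr =>
      simp [BinTree.bp, BinTree.size, List.count_cons, List.count_append,
        ihl.1, ihl.2, ihr.1, ihr.2]
      omega

lemma excess_cons_true (xs : List Bool) (k : ℕ) :
    excess (true :: xs) (k+1) = 1 + excess xs k := by
  simp [excess, List.count_cons]; ring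

lemma excess_left (l r : BinTree) (m : ℕ) (hm : m ≤ l.bp.length) :
    excess (BinTree.node l r).bp (m+1) = 1 + excess l.bp m := by
  rw [BinTree.bp, excess_cons_true]
  unfold excess
  rw [List.take_append_of_le_length hm]

lemma excess_right (l r : BinTree) (j : ℕ) :
    excess (BinTree.node l r).bp (l.bp.length + 2 + j) = excess r.bp j := by
  have h : (BinTree.node l r).bp = (true :: l.bp ++ [false]) ++ r.bp := by simp [BinTree.bp]
  rw [h]
  have h2 : l.bp.length + 2 + j = (true :: l.bp ++ [false]).length + j := by simp
  rw [h2, excess, List.take_append]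
  simp [List.count_append, List.count_cons, excess, (count_bp l).1, (count_bp l).2]
  rw [List.take_of_length_le (by simp)]
  simp [List.count_cons, List.count_append, (count_bp l).1, (count_bp l).2]

lemma excess_nonneg (t : BinTree) (k : ℕ) : 0 ≤ excess t.bp k := by
  induction t generalizing k with
  | leaf => simp [BinTree.bp, excess]
  | node l r ihl ihr =>
      rcases Nat.eq_zero_or_pos k with hk | hk
      · simp [hk, excess]
      · rcases le_or_gt k (l.bp.length + 1) with hk2 | hk2
        · obtain ⟨m, rfl⟩ : ∃ m, k = m + 1 := ⟨k - 1, by omega⟩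
          rw [excess_left l r m (by omega)]
          have := ihl m; omega
        · obtain ⟨j, rfl⟩ : ∃ j, k = l.bp.length + 2 + j := ⟨k - l.bp.length - 2, by omega⟩
          rw [excess_right]; exact ihr j

lemma closeIdx_lt (t : BinTree) (p : List Bool) (c : ℕ) (h : t.closeIdx p = some c) :
    c < t.bp.length := by
  induction t generalizing p c with
  | leaf => simp [BinTree.closeIdx] at h
  | node l r ihl ihr =>
      match p with
      | [] => simp [BinTree.closeIdx] at h; simp [BinTree.bp]; omega
      | false :: p' =>
          simp [BinTree.closeIdx] at h
          obtain ⟨c', hc', rfl⟩ := h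
          have := ihl p' c' hc'
          simp [BinTree.bp]; omega
      | true :: p' =>
          simp [BinTree.closeIdx] at h
          obtain ⟨c', hc', rfl⟩ := h
          have := ihr p' c' hc'
          simp [BinTree.bp]; omega

lemma excess_close (l r : BinTree) :
    excess (BinTree.node l r).bp (l.bp.length + 2) = 0 := by
  have := excess_right l r 0
  simpa [excess] using this

/-- for nodes `u ≤ v` (closing-parenthesis indices), the leftmost
minimum of the excess function on `[u, v]` is at the closing parenthesis of the
lowest common ancestor of `u` and `v`. -/
theorem lca_eq_rmq (t : BinTree) (pu pv : List Bool) (u v w : ℕ)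
    (hu : BinTree.closeIdx t pu = some u) (hv : BinTree.closeIdx t pv = some v)
    (huv : u ≤ v)
    (hw : BinTree.closeIdx t (lcp pu pv) = some w) :
    u ≤ w ∧ w ≤ v ∧
    (∀ k, u ≤ k → k ≤ v → excess t.bp (w + 1) ≤ excess t.bp (k + 1)) ∧
    (∀ k, u ≤ k → k < w → excess t.bp (w + 1) < excess t.bp (k + 1)) := by
  
  induction t generalizing pu pv u v w with
  | leaf => simp [BinTree.closeIdx] at hu
  | node l r ihl ihr =>
      match pu, pv with
      | [], pv =>
          have hw0 : lcp [] pv = [] := rfl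
          rw [hw0] at hw
          have hu' : u = l.bp.length + 1 := by
            simp [BinTree.closeIdx] at hu; omega
          have hww : w = l.bp.length + 1 := by
            simp [BinTree.closeIdx] at hw; omega
          subst hu'; subst hww
          have h0 : excess (BinTree.node l r).bp (l.bp.length + 1 + 1) = 0 :=
            excess_close l r
          refine ⟨le_refl _, huv, ?_, ?_⟩
          · intro k _ _; rw [h0]; exact excess_nonneg _ _
          · intro k hk1 hk2; omega
      | false :: pu', [] =>
          have hw0 : lcp (false :: pu') [] = [] := rfl
          rw [hw0] at hw
          have hvv : v = l.bp.length + 1 := by simp [BinTree.closeIdx] at hv; omega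
          have hww : w = l.bp.length + 1 := by simp [BinTree.closeIdx] at hw; omega
          simp [BinTree.closeIdx] at hu
          obtain ⟨u', hu', rfl⟩ := hu
          have hul := closeIdx_lt l pu' u' hu'
          subst hvv; subst hww
          have h0 : excess (BinTree.node l r).bp (l.bp.length + 1 + 1) = 0 :=
            excess_close l r
          refine ⟨by omega, le_refl _, ?_, ?_⟩
          · intro k _ _; rw [h0]; exact excess_nonneg _ _
          · intro k hk1 hk2
            rw [h0]
            obtain ⟨m, rfl⟩ : ∃ m, k = m + 1 := ⟨k - 1, by omega⟩
            rw [excess_left l r (m+1) (by omega)]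
            have := excess_nonneg l (m+1); linarith
      | true :: pu', [] =>
          simp [BinTree.closeIdx] at hu hv
          obtain ⟨u', hu', rfl⟩ := hu
          omega
      | false :: pu', true :: pv' =>
          simp [BinTree.closeIdx] at hu hv
          obtain ⟨u', hu', rfl⟩ := hu
          obtain ⟨v', hv', rfl⟩ := hv
          have hw0 : lcp (false :: pu') (true :: pv') = [] := by simp [lcp]
          rw [hw0] at hw
          have hww : w = l.bp.length + 1 := by simp [BinTree.closeIdx] at hw; omega
          subst hww
          have hul := closeIdx_lt l pu' u' hu'
          have h0 : excess (BinTree.node l r).bp (l.bp.length + 1 + 1) = 0 :=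
            excess_close l r
          refine ⟨by omega, by omega, ?_, ?_⟩
          · intro k _ _; rw [h0]; exact excess_nonneg _ _
          · intro k hk1 hk2
            rw [h0]
            obtain ⟨m, rfl⟩ : ∃ m, k = m + 1 := ⟨k - 1, by omega⟩
            rw [excess_left l r (m+1) (by omega)]
            have := excess_nonneg l (m+1); linarith
      | true :: pu', false :: pv' =>
          simp [BinTree.closeIdx] at hu hv
          obtain ⟨u', hu', rfl⟩ := hu
          obtain ⟨v', hv', rfl⟩ := hv
          have := closeIdx_lt l pv' v' hv'
          omega
      | false :: pu', false :: pv' =>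
          simp [BinTree.closeIdx] at hu hv
          obtain ⟨u', hu', rfl⟩ := hu
          obtain ⟨v', hv', rfl⟩ := hv
          have hw0 : lcp (false :: pu') (false :: pv') = false :: lcp pu' pv' := by
            simp [lcp]
          rw [hw0] at hw
          simp [BinTree.closeIdx] at hw
          obtain ⟨w', hw', rfl⟩ := hw
          obtain ⟨h1, h2, h3, h4⟩ := ihl pu' pv' u' v' w' hu' hv' (by omega) hw'
          have hvl := closeIdx_lt l pv' v' hv'
          have hwl := closeIdx_lt l (lcp pu' pv') w' hw'
          refine ⟨by omega, by omega, ?_, ?_⟩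
          · intro k hk1 hk2
            obtain ⟨m, rfl⟩ : ∃ m, k = m + 1 := ⟨k - 1, by omega⟩
            rw [excess_left l r (m+1) (by omega), excess_left l r (w'+1) (by omega)]
            have := h3 m (by omega) (by omega); linarith
          · intro k hk1 hk2
            obtain ⟨m, rfl⟩ : ∃ m, k = m + 1 := ⟨k - 1, by omega⟩
            rw [excess_left l r (m+1) (by omega), excess_left l r (w'+1) (by omega)]
            have := h4 m (by omega) (by omega); linarith
      | true :: pu', true :: pv' =>
          simp [BinTree.closeIdx] at hu hv
          obtain ⟨u', hu', rfl⟩ := hu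
          obtain ⟨v', hv', rfl⟩ := hv
          have hw0 : lcp (true :: pu') (true :: pv') = true :: lcp pu' pv' := by
            simp [lcp]
          rw [hw0] at hw
          simp [BinTree.closeIdx] at hw
          obtain ⟨w', hw', rfl⟩ := hw
          obtain ⟨h1, h2, h3, h4⟩ := ihr pu' pv' u' v' w' hu' hv' (by omega) hw'
          have ew : excess (BinTree.node l r).bp (w' + (l.bp.length + 2) + 1)
              = excess r.bp (w'+1) := by
            rw [show w' + (l.bp.length + 2) + 1 = l.bp.length + 2 + (w'+1) by omega]
            exact excess_right l r (w'+1)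
          refine ⟨by omega, by omega, ?_, ?_⟩
          · intro k hk1 hk2
            obtain ⟨m, rfl⟩ : ∃ m, k = m + (l.bp.length + 2) :=
              ⟨k - l.bp.length - 2, by omega⟩
            have ek : excess (BinTree.node l r).bp (m + (l.bp.length + 2) + 1)
                = excess r.bp (m+1) := by
              rw [show m + (l.bp.length + 2) + 1 = l.bp.length + 2 + (m+1) by omega]
              exact excess_right l r (m+1)
            rw [ew, ek]
            exact h3 m (by omega) (by omega)
          · intro k hk1 hk2
            obtain ⟨m, rfl⟩ : ∃ m, k = m + (l.bp.length + 2) :=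
              ⟨k - l.bp.length - 2, by omega⟩
            have ek : excess (BinTree.node l r).bp (m + (l.bp.length + 2) + 1)
                = excess r.bp (m+1) := by
              rw [show m + (l.bp.length + 2) + 1 = l.bp.length + 2 + (m+1) by omega]
              exact excess_right l r (m+1)
            rw [ew, ek]
            exact h4 m (by omega) (by omega)
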